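/- Let ⟨1⟩,…,⟨k-1⟩ be a permutation sorting v in descending order: v_{⟨1⟩} ≥ ⋯ ≥ v_{⟨k-1⟩}. Fix n_U, n_M ∈ {0,…,k-1} with n_U + n_M ≤ k-1, set S = ∑_{i=n_U+1}^{n_U+n_M} v_{⟨i⟩}, γ = (C·n_U + S)/(n_M + 1), and define b by b_{⟨i⟩} = C if i ≤ n_U, b_{⟨i⟩} = v_{⟨i⟩} - γ if n_U < i ≤ n_U+n_M, and b_{⟨i⟩} = 0 otherwise. Then the all-ones matrix satisfies O b = γ·1, and ((I+O)b)_{⟨i⟩} equals C+γ for i ≤ n_U, v_{⟨i⟩} for n_U < i ≤ n_U+n_M, and γ for i > n_U+n_M. -/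
import Mathlib


open Matrix Finset

noncomputable def pimat (k : ℕ) : Matrix (Fin (k-1)) (Fin k) ℝ :=
  Matrix.of fun i j => if (j : ℕ) = 0 then 1 else if (j : ℕ) = (i : ℕ) + 1 then -1 else 0

noncomputable def Pmat (k : ℕ) (y : Fin k) : Matrix (Fin k) (Fin k) ℝ :=
  Matrix.of fun i j =>
    if (i : ℕ) = 0 then (if j = y then 1 else 0)
    else if i = y then (if (j : ℕ) = 0 then 1 else 0)
    else (if j = i then 1 else 0)

noncomputable def Theta (k : ℕ) : Matrix (Fin (k-1)) (Fin (k-1)) ℝ :=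
  1 + Matrix.of fun _ _ => 1

noncomputable def qform (k : ℕ) (v b : Fin (k-1) → ℝ) : ℝ :=
  (1/2) * (b ⬝ᵥ (Theta k *ᵥ b)) - v ⬝ᵥ b

theorem stmt10 (k : ℕ) (hk : 2 ≤ k) (C : ℝ) (hC : 0 < C) (v : Fin (k-1) → ℝ)
    (σ : Equiv.Perm (Fin (k-1)))
    (hsort : ∀ i j : Fin (k-1), i ≤ j → v (σ j) ≤ v (σ i))
    (nU nM : ℕ) (hUM : nU + nM ≤ k - 1)
    (S γ : ℝ)
    (hS : S = ∑ i ∈ Finset.univ.filter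
        (fun i : Fin (k-1) => nU ≤ (i : ℕ) ∧ (i : ℕ) < nU + nM), v (σ i))
    (hγ : γ = (C * (nU : ℝ) + S) / ((nM : ℝ) + 1))
    (b : Fin (k-1) → ℝ)
    (hb : ∀ i : Fin (k-1), b (σ i) =
      if (i : ℕ) < nU then C
      else if (i : ℕ) < nU + nM then v (σ i) - γ
      else 0) :
    ((Matrix.of fun _ _ => (1 : ℝ) : Matrix (Fin (k-1)) (Fin (k-1)) ℝ) *ᵥ b
        = fun _ => γ) ∧
    ∀ i : Fin (k-1), (Theta k *ᵥ b) (σ i) =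
      if (i : ℕ) < nU then C + γ
      else if (i : ℕ) < nU + nM then v (σ i)
      else γ := by
  have hcardA : (Finset.univ.filter (fun i : Fin (k-1) => (i:ℕ) < nU)).card = nU := by
    rw [Finset.card_filter, Fin.sum_univ_eq_sum_range (fun i => if i < nU then 1 else 0)]
    rw [← Finset.card_filter]
    have : (Finset.range (k-1)).filter (· < nU) = Finset.range nU := by
      ext x; simp only [Finset.mem_filter, Finset.mem_range]; omega
    rw [this, Finset.card_range]
  have hcardB : (Finset.univ.filter
      (fun i : Fin (k-1) => nU ≤ (i:ℕ) ∧ (i:ℕ) < nU + nM)).card = nM := by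
    rw [Finset.card_filter, Fin.sum_univ_eq_sum_range
      (fun i => if nU ≤ i ∧ i < nU + nM then 1 else 0)]
    rw [← Finset.card_filter]
    have : (Finset.range (k-1)).filter (fun i => nU ≤ i ∧ i < nU + nM)
        = Finset.Ico nU (nU + nM) := by
      ext x; simp only [Finset.mem_filter, Finset.mem_range, Finset.mem_Ico]; omega
    rw [this, Nat.card_Ico]; omega
  have hsum : ∑ j, b j = γ := by
    have h1 : ∑ j, b j = ∑ i, b (σ i) := (Equiv.sum_comp σ b).symm
    rw [h1]
    have h2 : ∑ i, b (σ i) = ∑ i : Fin (k-1),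
        (if (i:ℕ) < nU then C else if (i:ℕ) < nU + nM then v (σ i) - γ else 0) := by
      exact Finset.sum_congr rfl fun i _ => hb i
    rw [h2, ← Finset.sum_filter_add_sum_filter_not Finset.univ
      (fun i : Fin (k-1) => (i:ℕ) < nU)]
    have h3 : ∑ i ∈ Finset.univ.filter (fun i : Fin (k-1) => (i:ℕ) < nU),
        (if (i:ℕ) < nU then C else if (i:ℕ) < nU + nM then v (σ i) - γ else 0)
        = C * nU := by
      rw [Finset.sum_congr rfl (fun i hi => ?_), Finset.sum_const, hcardA,
        nsmul_eq_mul, mul_comm]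
      rw [if_pos (Finset.mem_filter.mp hi).2]
    have h4 : ∑ i ∈ Finset.univ.filter (fun i : Fin (k-1) => ¬ (i:ℕ) < nU),
        (if (i:ℕ) < nU then C else if (i:ℕ) < nU + nM then v (σ i) - γ else 0)
        = S - nM * γ := by
      rw [← Finset.sum_filter_add_sum_filter_not
        (Finset.univ.filter (fun i : Fin (k-1) => ¬ (i:ℕ) < nU))
        (fun i : Fin (k-1) => (i:ℕ) < nU + nM)]
      have e1 : (Finset.univ.filter (fun i : Fin (k-1) => ¬ (i:ℕ) < nU)).filter
          (fun i : Fin (k-1) => (i:ℕ) < nU + nM)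
          = Finset.univ.filter (fun i : Fin (k-1) => nU ≤ (i:ℕ) ∧ (i:ℕ) < nU + nM) := by
        ext x; simp only [Finset.mem_filter, Finset.mem_univ, true_and]; omega
      have e2 : ∑ i ∈ (Finset.univ.filter (fun i : Fin (k-1) => ¬ (i:ℕ) < nU)).filter
          (fun i : Fin (k-1) => ¬ (i:ℕ) < nU + nM),
          (if (i:ℕ) < nU then C else if (i:ℕ) < nU + nM then v (σ i) - γ else 0) = 0 := by
        apply Finset.sum_eq_zero
        intro i hi
        simp only [Finset.mem_filter] at hi
        rw [if_neg hi.1.2, if_neg hi.2]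
      rw [e1, e2, add_zero]
      have e3 : ∑ i ∈ Finset.univ.filter
          (fun i : Fin (k-1) => nU ≤ (i:ℕ) ∧ (i:ℕ) < nU + nM),
          (if (i:ℕ) < nU then C else if (i:ℕ) < nU + nM then v (σ i) - γ else 0)
          = ∑ i ∈ Finset.univ.filter
          (fun i : Fin (k-1) => nU ≤ (i:ℕ) ∧ (i:ℕ) < nU + nM), (v (σ i) - γ) :=
        Finset.sum_congr rfl fun i hi => by
          have := Finset.mem_filter.mp hi
          rw [if_neg (by omega : ¬ (i:ℕ) < nU), if_pos this.2.2]
      rw [e3, Finset.sum_sub_distrib, ← hS, Finset.sum_const, hcardB, nsmul_eq_mul]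
    rw [h3, h4, hγ]
    have hnm : ((nM:ℝ) + 1) ≠ 0 := by positivity
    field_simp
    ring
  have hO : ((Matrix.of fun _ _ => (1 : ℝ) : Matrix (Fin (k-1)) (Fin (k-1)) ℝ) *ᵥ b
      = fun _ => γ) := by
    funext j
    simp only [Matrix.mulVec, dotProduct, Matrix.of_apply, one_mul]
    exact hsum
  refine ⟨hO, fun i => ?_⟩
  have hT : (Theta k *ᵥ b) (σ i) = b (σ i) + γ := by
    rw [Theta, Matrix.add_mulVec, Matrix.one_mulVec]
    simp only [Pi.add_apply]
    rw [congrFun hO (σ i)]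
  rw [hT, hb i]
  by_cases h1 : (i:ℕ) < nU
  · simp [h1]
  · by_cases h2 : (i:ℕ) < nU + nM
    · simp [h1, h2]
    · simp [h1, h2]
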